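/- arXiv:1301.3443 — 2 statements merged into one kernel-verified Lean document; each statement's English description precedes it below -/
import Mathlib

section
/- The loop space of the circle based at any point is equivalent (as a type/set) to the integers. -/
open Real unitInterval

noncomputable section

namespace LoopCircle

/-- A continuous function whose values are integer multiples of `2π` is constant on a
preconnected space. -/
lemma const_of_int_mul {Y : Type*} [TopologicalSpace Y] [PreconnectedSpace Y]
    {φ : Y → ℝ} (hφ : Continuous φ) (hi : ∀ y, ∃ m : ℤ, φ y = m * (2 * π)) (a b : Y) :
    φ a = φ b := by
  have key : ∀ a b : Y, φ a < φ b → False := by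
    intro a b hab
    obtain ⟨ma, hma⟩ := hi a
    obtain ⟨mb, hmb⟩ := hi b
    have h2π : (0:ℝ) < 2 * π := by positivity
    have hmab : ma < mb := by
      have : (ma : ℝ) < mb := by
        rw [hma, hmb] at hab
        exact lt_of_mul_lt_mul_right (by linarith) h2π.le
      exact_mod_cast this
    have hmab' : (ma : ℝ) + 1 ≤ mb := by exact_mod_cast hmab
    have hz1 : φ a ≤ ((ma:ℝ) + 1/2) * (2*π) := by rw [hma]; nlinarith
    have hz2 : ((ma:ℝ) + 1/2) * (2*π) ≤ φ b := by rw [hmb]; nlinarith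
    obtain ⟨y, hy⟩ := intermediate_value_univ a b hφ ⟨hz1, hz2⟩
    obtain ⟨m, hm⟩ := hi y
    rw [hy] at hm
    have hmm : (ma : ℝ) + 1/2 = m := mul_right_cancel₀ h2π.ne' hm
    have h1 : ma < m := by
      have : (ma : ℝ) < m := by linarith
      exact_mod_cast this
    have h2 : m < ma + 1 := by
      have : (m : ℝ) < (ma : ℝ) + 1 := by linarith
      exact_mod_cast this
    omega
  rcases lt_trichotomy (φ a) (φ b) with h | h | h
  · exact absurd h (fun h => key a b h)
  · exact h
  · exact absurd h (fun h => key b a h)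

lemma circle_mem_slitPlane {z : Circle} (h : (z : ℂ) ≠ -1) : (z : ℂ) ∈ Complex.slitPlane := by
  by_contra hc
  rw [Complex.mem_slitPlane_iff] at hc
  push_neg at hc
  obtain ⟨hre, him⟩ := hc
  have habs : ‖(z : ℂ)‖ = 1 := z.norm_coe
  have hz : (z : ℂ) = ((z : ℂ).re : ℂ) := Complex.ext rfl (by simp [him])
  rw [hz, Complex.norm_real, Real.norm_eq_abs] at habs
  have : (z : ℂ).re = -1 := by
    rcases abs_eq (by norm_num : (0:ℝ) ≤ 1) |>.mp habs with h1 | h1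
    · linarith
    · exact h1
  exact h (by rw [hz, this]; norm_num)

lemma div_ne_neg_one {z w : Circle} (h : dist z w < 2) : ((z / w : Circle) : ℂ) ≠ -1 := by
  intro heq
  rw [Circle.coe_div, div_eq_iff w.coe_ne_zero] at heq
  have : dist z w = 2 := by
    rw [show dist z w = dist (z : ℂ) (w : ℂ) from rfl, Complex.dist_eq, heq]
    have : -1 * (w : ℂ) - w = -(2 * w) := by ring
    rw [this, norm_neg, norm_mul]
    simp [w.norm_coe]
  linarith

lemma exp_sum (s : Finset ℕ) (h : ℕ → ℝ) :
    Circle.exp (∑ k ∈ s, h k) = ∏ k ∈ s, Circle.exp (h k) := by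
  classical
  induction s using Finset.induction_on with
  | empty => simp
  | insert _ _ hx ih => rw [Finset.sum_insert hx, Finset.prod_insert hx, Circle.exp_add, ih]

/-- Key lifting lemma: a continuous map to the circle from a compact metric space equipped
with an explicit contraction lifts through `Circle.exp`. -/
lemma exists_lift {X : Type*} [MetricSpace X] [CompactSpace X]
    {f : X → Circle} (hf : Continuous f)
    (c : I × X → X) (hc : Continuous c) (pt : X)
    (hc0 : ∀ x, c (0, x) = pt) (hc1 : ∀ x, c (1, x) = x) :
    ∃ g : X → ℝ, Continuous g ∧ ∀ x, Circle.exp (g x) = f x := by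
  have hFc : Continuous (fun p : I × X => f (c p)) := hf.comp hc
  obtain ⟨δ, hδ0, hδ⟩ := Metric.uniformContinuous_iff.mp
    (CompactSpace.uniformContinuous_of_continuous hFc) 2 (by norm_num)
  obtain ⟨n, hn⟩ := exists_nat_gt (1 / δ)
  have hn0 : 0 < (n:ℝ) := lt_trans (by positivity) hn
  set F : I × X → Circle := fun p => f (c p) with hF
  set u : ℕ → I := fun k =>
    ⟨min ((k:ℝ)/n) 1, le_min (by positivity) zero_le_one, min_le_right _ _⟩ with hu
  have hu0 : u 0 = 0 := by
    apply Subtype.ext; simp [hu]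
  have hun : u n = 1 := by
    apply Subtype.ext
    simp [hu, div_self hn0.ne']
  have hd2 : ∀ (k : ℕ) (x : X), dist (F (u (k+1), x)) (F (u k, x)) < 2 := by
    intro k x
    apply hδ
    have hdu : dist (u (k+1)) (u k) < δ := by
      rw [Subtype.dist_eq, Real.dist_eq]
      have step1 : |(↑(u (k+1)) : ℝ) - ↑(u k)| ≤ max |((k+1:ℕ):ℝ)/n - (k:ℝ)/n| |1-1| :=
        abs_min_sub_min_le_max _ _ _ _
      have step2 : max |((k+1:ℕ):ℝ)/n - (k:ℝ)/n| |1-1| ≤ 1/n := by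
        apply max_le
        · have : ((k+1:ℕ):ℝ)/n - (k:ℝ)/n = 1/n := by push_cast; field_simp; ring
          rw [this, abs_of_nonneg (by positivity)]
        · rw [sub_self, abs_zero]; positivity
      have step3 : 1/n < δ := by
        rw [div_lt_iff₀ hn0]
        rw [div_lt_iff₀ hδ0] at hn
        linarith [hn]
      linarith
    rw [Prod.dist_eq]
    exact max_lt hdu (by simpa using hδ0)
  set q : ℕ → X → Circle := fun k x => F (u (k+1), x) / F (u k, x) with hq
  have hqslit : ∀ k x, (q k x : ℂ) ∈ Complex.slitPlane := fun k x =>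
    circle_mem_slitPlane (div_ne_neg_one (hd2 k x))
  have hqc : ∀ k, Continuous fun x => q k x := by
    intro k
    exact (hFc.comp (continuous_const.prodMk continuous_id)).div'
      (hFc.comp (continuous_const.prodMk continuous_id))
  refine ⟨fun x => Complex.arg (f pt) + ∑ k ∈ Finset.range n, Complex.arg (q k x), ?_, ?_⟩
  · refine continuous_const.add (continuous_finset_sum _ fun k _ => ?_)
    rw [continuous_iff_continuousAt]
    intro x
    have hcc : Continuous fun x => ((q k x : ℂ)) := (hqc k).subtype_val
    show ContinuousAt (Complex.arg ∘ fun x => ((q k x : ℂ))) x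
    exact ContinuousAt.comp (Complex.continuousAt_arg (hqslit k x)) hcc.continuousAt
  · intro x
    rw [Circle.exp_add, exp_sum]
    have h1 : ∀ k, Circle.exp (Complex.arg (q k x)) = q k x := fun k => Circle.exp_arg _
    rw [Finset.prod_congr rfl (fun k _ => h1 k), Circle.exp_arg,
      Finset.prod_range_div (fun k => F (u k, x)) n]
    rw [hun, hu0]
    show f pt * (F (1, x) / F (0, x)) = f x
    rw [hF]
    simp only [hc1, hc0]
    apply Subtype.ext
    simp only [Circle.coe_mul, Circle.coe_div]
    field_simp

/-- Contraction of `I` to `0`. -/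
def cI : I × I → I := fun p => ⟨(p.1 : ℝ) * p.2, mul_mem p.1.2 p.2.2⟩

lemma cI_continuous : Continuous cI :=
  ((continuous_fst.subtype_val).mul (continuous_snd.subtype_val)).subtype_mk _

lemma cI_zero (x : I) : cI (0, x) = 0 := by apply Subtype.ext; simp [cI]

lemma cI_one (x : I) : cI (1, x) = x := by apply Subtype.ext; simp [cI]

/-- Contraction of `I × I` to `(0, 0)`. -/
def cI2 : I × (I × I) → I × I := fun p => (cI (p.1, p.2.1), cI (p.1, p.2.2))

lemma cI2_continuous : Continuous cI2 :=
  (cI_continuous.comp (continuous_fst.prodMk (continuous_snd.fst))).prodMk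
    (cI_continuous.comp (continuous_fst.prodMk (continuous_snd.snd)))

lemma cI2_zero (x : I × I) : cI2 (0, x) = (0, 0) := by
  simp [cI2, cI_zero]

lemma cI2_one (x : I × I) : cI2 (1, x) = x := by
  simp [cI2, cI_one]

variable {x₀ : Circle}

lemma loop_lift (γ : Path x₀ x₀) :
    ∃ g : I → ℝ, Continuous g ∧ ∀ t, Circle.exp (g t) = γ t :=
  exists_lift γ.continuous cI cI_continuous 0 cI_zero cI_one

/-- Real winding displacement of a loop (difference of endpoints of a chosen lift). -/
def wind (γ : Path x₀ x₀) : ℝ := (loop_lift γ).choose 1 - (loop_lift γ).choose 0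

lemma wind_eq (γ : Path x₀ x₀) {g : I → ℝ} (hgc : Continuous g)
    (hg : ∀ t, Circle.exp (g t) = γ t) : wind γ = g 1 - g 0 := by
  obtain ⟨hc, hl⟩ := (loop_lift γ).choose_spec
  have hφ : ∀ t : I, ∃ m : ℤ, ((loop_lift γ).choose t - g t) = m * (2*π) := by
    intro t
    obtain ⟨m, hm⟩ := Circle.exp_eq_exp.mp ((hl t).trans (hg t).symm)
    exact ⟨m, by linarith [hm]⟩
  have hconst := const_of_int_mul (hc.sub hgc) hφ 1 0
  unfold wind
  simp only [Pi.sub_apply] at hconst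
  linarith [hconst]

lemma wind_int (γ : Path x₀ x₀) : ∃ m : ℤ, wind γ = m * (2*π) := by
  obtain ⟨hc, hl⟩ := (loop_lift γ).choose_spec
  have : Circle.exp ((loop_lift γ).choose 1) = Circle.exp ((loop_lift γ).choose 0) := by
    rw [hl 1, hl 0, γ.source, γ.target]
  obtain ⟨m, hm⟩ := Circle.exp_eq_exp.mp this
  exact ⟨m, by unfold wind; linarith [hm]⟩

/-- The winding number of a loop. -/
def windZ (γ : Path x₀ x₀) : ℤ := (wind_int γ).choose

lemma windZ_spec (γ : Path x₀ x₀) : wind γ = (windZ γ : ℝ) * (2*π) := (wind_int γ).choose_spec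

lemma windZ_eq_of_wind_eq {γ₀ γ₁ : Path x₀ x₀} (h : wind γ₀ = wind γ₁) : windZ γ₀ = windZ γ₁ := by
  have h2π : (0:ℝ) < 2 * π := by positivity
  have := (windZ_spec γ₀).symm.trans (h.trans (windZ_spec γ₁))
  exact_mod_cast mul_right_cancel₀ h2π.ne' this

lemma wind_homotopic {γ₀ γ₁ : Path x₀ x₀} (h : γ₀.Homotopic γ₁) : windZ γ₀ = windZ γ₁ := by
  obtain ⟨H⟩ := h
  obtain ⟨G, hGc, hG⟩ := exists_lift (f := fun p : I × I => H p) H.continuous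
    cI2 cI2_continuous (0, 0) cI2_zero cI2_one
  -- G is constant on the left and right edges
  have edge : ∀ t : I, (∀ s : I, H (s, t) = H (0, t)) → ∀ s : I, G (s, t) = G (0, t) := by
    intro t hHt s
    have hφ : ∀ s : I, ∃ m : ℤ, (G (s, t) - G (0, t)) = m * (2*π) := by
      intro s
      have : Circle.exp (G (s, t)) = Circle.exp (G (0, t)) := by
        rw [hG (s, t), hG (0, t), hHt s]
      obtain ⟨m, hm⟩ := Circle.exp_eq_exp.mp this
      exact ⟨m, by linarith [hm]⟩
    have hc : Continuous fun s : I => G (s, t) - G (0, t) :=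
      (hGc.comp (continuous_id.prodMk continuous_const)).sub continuous_const
    have := const_of_int_mul hc hφ s 0
    have h00 : G (0, t) - G (0, t) = 0 := sub_self _
    rw [h00, sub_eq_zero] at this
    exact this
  have e0 : ∀ s : I, G (s, 0) = G (0, 0) :=
    edge 0 (fun s => (H.source s).trans (H.source 0).symm)
  have e1 : ∀ s : I, G (s, 1) = G (0, 1) :=
    edge 1 (fun s => (H.target s).trans (H.target 0).symm)
  have hcont0 : Continuous fun t : I => G (0, t) :=
    hGc.comp (continuous_const.prodMk continuous_id)
  have hcont1 : Continuous fun t : I => G (1, t) :=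
    hGc.comp (continuous_const.prodMk continuous_id)
  have w0 : wind γ₀ = G (0, 1) - G (0, 0) :=
    wind_eq γ₀ (g := fun t => G (0, t)) hcont0
      (fun t => by rw [hG (0, t)]; exact H.apply_zero t)
  have w1 : wind γ₁ = G (1, 1) - G (1, 0) :=
    wind_eq γ₁ (g := fun t => G (1, t)) hcont1
      (fun t => by rw [hG (1, t)]; exact H.apply_one t)
  apply windZ_eq_of_wind_eq
  rw [w0, w1, e0 1, e1 1]

lemma homotopic_of_windZ_eq {γ₀ γ₁ : Path x₀ x₀} (h : windZ γ₀ = windZ γ₁) :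
    γ₀.Homotopic γ₁ := by
  obtain ⟨g₀, hg₀c, hg₀⟩ := loop_lift γ₀
  obtain ⟨g₁, hg₁c, hg₁⟩ := loop_lift γ₁
  have hexp : Circle.exp (g₁ 0) = Circle.exp (g₀ 0) := by
    rw [hg₀ 0, hg₁ 0, γ₀.source, γ₁.source]
  obtain ⟨m, hm⟩ := Circle.exp_eq_exp.mp hexp
  set g₁' : I → ℝ := fun t => g₁ t - m * (2*π) with hg₁'def
  have hg₁'c : Continuous g₁' := hg₁c.sub continuous_const
  have hg₁' : ∀ t, Circle.exp (g₁' t) = γ₁ t := fun t => by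
    rw [← hg₁ t]
    exact Circle.exp_eq_exp.mpr ⟨-m, by push_cast; ring⟩
  have h0 : g₁' 0 = g₀ 0 := by
    show g₁ 0 - (m : ℝ) * (2*π) = g₀ 0
    linarith [hm]
  have hww : wind γ₀ = wind γ₁ := by
    rw [windZ_spec γ₀, windZ_spec γ₁, h]
  have h1 : g₁' 1 = g₀ 1 := by
    have e0 := wind_eq γ₀ hg₀c hg₀
    have e1 := wind_eq γ₁ hg₁'c hg₁'
    rw [e0, e1] at hww
    linarith [hww, h0]
  refine ⟨⟨⟨⟨fun p => Circle.exp ((1 - (p.1:ℝ)) * g₀ p.2 + (p.1:ℝ) * g₁' p.2), ?_⟩, ?_, ?_⟩, ?_⟩⟩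
  · apply Circle.exp.continuous.comp
    apply Continuous.add
    · exact (continuous_const.sub (continuous_fst.subtype_val)).mul (hg₀c.comp continuous_snd)
    · exact (continuous_fst.subtype_val).mul (hg₁'c.comp continuous_snd)
  · intro t
    show Circle.exp ((1 - (0:ℝ)) * g₀ t + (0:ℝ) * g₁' t) = γ₀ t
    rw [show (1 - (0:ℝ)) * g₀ t + (0:ℝ) * g₁' t = g₀ t by ring]
    exact hg₀ t
  · intro t
    show Circle.exp ((1 - (1:ℝ)) * g₀ t + (1:ℝ) * g₁' t) = γ₁ t
    rw [show (1 - (1:ℝ)) * g₀ t + (1:ℝ) * g₁' t = g₁' t by ring]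
    exact hg₁' t
  · intro s t ht
    simp only [Set.mem_insert_iff, Set.mem_singleton_iff] at ht
    rcases ht with rfl | rfl
    · show Circle.exp ((1 - (s:ℝ)) * g₀ 0 + (s:ℝ) * g₁' 0) = γ₀ 0
      rw [h0, show (1 - (s:ℝ)) * g₀ 0 + (s:ℝ) * g₀ 0 = g₀ 0 by ring]
      exact hg₀ 0
    · show Circle.exp ((1 - (s:ℝ)) * g₀ 1 + (s:ℝ) * g₁' 1) = γ₀ 1
      rw [h1, show (1 - (s:ℝ)) * g₀ 1 + (s:ℝ) * g₀ 1 = g₀ 1 by ring]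
      exact hg₀ 1

/-- The standard loop winding `m` times. -/
def loopN (x₀ : Circle) (m : ℤ) : Path x₀ x₀ where
  toFun t := x₀ * Circle.exp ((m:ℝ) * (2*π) * t)
  continuous_toFun := by
    exact continuous_const.mul
      (Circle.exp.continuous.comp (continuous_const.mul continuous_subtype_val))
  source' := by simp
  target' := by simp [Circle.exp_int_mul_two_pi]

lemma windZ_loopN (m : ℤ) : windZ (loopN x₀ m) = m := by
  have hlift : ∀ t : I, Circle.exp (Complex.arg x₀ + (m:ℝ) * (2*π) * t) = loopN x₀ m t := by
    intro t
    rw [Circle.exp_add, Circle.exp_arg]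
    rfl
  have hc : Continuous fun t : I => Complex.arg x₀ + (m:ℝ) * (2*π) * t :=
    continuous_const.add (continuous_const.mul continuous_subtype_val)
  have := wind_eq (loopN x₀ m) hc hlift
  rw [windZ_spec (loopN x₀ m)] at this
  simp only [Set.Icc.coe_one, Set.Icc.coe_zero, mul_one, mul_zero] at this
  have h2π : (0:ℝ) < 2 * π := by positivity
  have : (windZ (loopN x₀ m) : ℝ) * (2*π) = (m:ℝ) * (2*π) := by linarith [this]
  exact_mod_cast mul_right_cancel₀ h2π.ne' this

attribute [local instance] Path.Homotopic.setoid

/-- The winding number descends to homotopy classes of loops. -/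
def windQ (x₀ : Circle) : Path.Homotopic.Quotient x₀ x₀ → ℤ :=
  Quotient.lift windZ (fun _ _ h => wind_homotopic h)

lemma windQ_bijective : Function.Bijective (windQ x₀) := by
  constructor
  · intro a b
    refine Quotient.inductionOn₂ a b ?_
    intro γ₀ γ₁ h
    exact Quotient.sound (homotopic_of_windZ_eq h)
  · intro m
    exact ⟨⟦loopN x₀ m⟧, windZ_loopN m⟩

open CategoryTheory in
/-- The fundamental group is the type of homotopy classes of loops. -/
def fgEquiv (x₀ : Circle) :
    FundamentalGroup Circle x₀ ≃ Path.Homotopic.Quotient x₀ x₀ where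
  toFun p := p
  invFun q :=
    q
  left_inv p := rfl
  right_inv q := rfl

end LoopCircle

theorem loop_space_circle_equiv_int (x₀ : Circle) :
    Nonempty (FundamentalGroup Circle x₀ ≃ ℤ) :=
  ⟨(LoopCircle.fgEquiv x₀).trans (Equiv.ofBijective _ LoopCircle.windQ_bijective)⟩
end
end

section
/- All higher homotopy groups of the circle vanish: πₙ(S¹) is trivial for n ≥ 2. -/
open scoped unitInterval Topology
open Complex

noncomputable section

namespace HigherPiCircle

/-- A unit complex number that is not `-1` lies in the slit plane. -/
lemma mem_slitPlane_of_ne_neg_one {z : ℂ} (hz : ‖z‖ = 1) (h : z ≠ -1) :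
    z ∈ Complex.slitPlane := by
  rw [Complex.mem_slitPlane_iff]
  by_contra hcon
  push_neg at hcon
  obtain ⟨h1, h2⟩ := hcon
  have hzre : z = (z.re : ℂ) := Complex.ext rfl (by simpa using h2)
  rw [hzre, Complex.norm_real, Real.norm_eq_abs] at hz
  have : z.re = -1 := by
    cases abs_cases z.re with
    | inl hc => nlinarith [hc.1, hc.2, hz]
    | inr hc => linarith [hc.1, hz]
  exact h (by rw [hzre, this]; norm_num)

/-- Constancy of a continuous real-valued function whose `Circle.exp` is `1`
on a preconnected set. -/
lemma const_on_preconnected {A : Type*} [TopologicalSpace A] (g : C(A, ℝ))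
    {s : Set A} (hs : IsPreconnected s) (h1 : ∀ x ∈ s, Circle.exp (g x) = 1)
    {a b : A} (ha : a ∈ s) (hb : b ∈ s) : g a = g b := by
  have aux : ∀ a ∈ s, ∀ b ∈ s, ¬ g a < g b := by
    intro a ha b hb hlt
    obtain ⟨ka, hka⟩ := Circle.exp_eq_one.mp (h1 a ha)
    obtain ⟨kb, hkb⟩ := Circle.exp_eq_one.mp (h1 b hb)
    have hpi := Real.pi_pos
    have hkab : (ka : ℝ) < kb := by nlinarith
    have hkab' : ka + 1 ≤ kb := by exact_mod_cast Int.add_one_le_iff.mpr (by exact_mod_cast hkab)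
    have hkab'' : (ka : ℝ) + 1 ≤ kb := by exact_mod_cast hkab'
    have hmem : g a + Real.pi ∈ Set.Icc (g a) (g b) := by
      constructor
      · linarith
      · rw [hka, hkb]; nlinarith
    have himg : IsPreconnected (g '' s) := hs.image g g.continuous.continuousOn
    have := himg.Icc_subset ⟨a, ha, rfl⟩ ⟨b, hb, rfl⟩ hmem
    obtain ⟨c, hc, hgc⟩ := this
    obtain ⟨kc, hkc⟩ := Circle.exp_eq_one.mp (h1 c hc)
    rw [hkc, hka] at hgc
    have h2 : ((2 * (kc - ka) : ℤ) : ℝ) * Real.pi = 1 * Real.pi := by push_cast; nlinarith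
    have h3 : (2 * (kc - ka) : ℤ) = 1 := by
      exact_mod_cast mul_right_cancel₀ (ne_of_gt hpi) h2
    omega
  exact le_antisymm (not_lt.mp (aux b hb a ha)) (not_lt.mp (aux a ha b hb))

variable {n : ℕ}

/-- The scaled point `min (k/N) 1 • x` inside the cube. -/
def scale (N k : ℕ) (x : I^ Fin n) : I^ Fin n := fun i =>
  ⟨min ((k : ℝ) / N) 1 * (x i : ℝ),
    unitInterval.mul_mem ⟨le_min (by positivity) zero_le_one, min_le_right _ _⟩ (x i).2⟩

lemma continuous_scale (N k : ℕ) : Continuous (scale (n := n) N k) := by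
  refine continuous_pi fun i => Continuous.subtype_mk ?_ _
  exact continuous_const.mul (continuous_subtype_val.comp (continuous_apply i))

lemma scale_zero (x : I^ Fin n) : scale N 0 x = fun _ => 0 := by
  funext i; simp [scale]

lemma scale_self {N : ℕ} (hN : 0 < N) (x : I^ Fin n) : scale N N x = x := by
  funext i
  apply Subtype.ext
  have : ((N : ℝ) / N) = 1 := div_self (by positivity)
  simp [scale, this]

lemma dist_scale_succ {N k : ℕ} (hk : k < N) (x : I^ Fin n) :
    dist (scale N (k + 1) x) (scale N k x) ≤ 1 / N := by
  have hNpos : 0 < N := Nat.pos_of_ne_zero (by rintro rfl; exact Nat.not_lt_zero _ hk)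
  have hN : (0:ℝ) < N := by exact_mod_cast hNpos
  rw [dist_pi_le_iff (by positivity)]
  intro i
  rw [Subtype.dist_eq]
  simp only [scale]
  have hx0 : (0:ℝ) ≤ x i := (x i).2.1
  have hx1 : (x i : ℝ) ≤ 1 := (x i).2.2
  have h1 : min ((k:ℝ)/N) 1 = (k:ℝ)/N := min_eq_left (by
    rw [div_le_one hN]; exact_mod_cast hk.le)
  have h2 : min (((k:ℕ)+1:ℝ)/N) 1 = ((k:ℝ)+1)/N := min_eq_left (by
    rw [div_le_one hN]; exact_mod_cast hk)
  rw [Real.dist_eq]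
  push_cast
  rw [h1, h2]
  have : ((k:ℝ)+1)/N * x i - (k:ℝ)/N * x i = x i / N := by ring
  rw [this, _root_.abs_of_nonneg (by positivity)]
  gcongr


lemma exp_sum {ι : Type*} (s : Finset ι) (h : ι → ℝ) :
    Circle.exp (∑ i ∈ s, h i) = ∏ i ∈ s, Circle.exp (h i) := by
  classical
  induction s using Finset.induction with
  | empty => simp [Circle.exp_zero]
  | insert _ _ hx ih => rw [Finset.sum_insert hx, Finset.prod_insert hx, Circle.exp_add, ih]

lemma zero_mem_boundary (hn : 0 < n) :
    (fun _ => 0 : I^ Fin n) ∈ Cube.boundary (Fin n) :=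
  ⟨⟨0, hn⟩, Or.inl rfl⟩

lemma exists_lift (hn : 0 < n) (f : C(I^ Fin n, Circle)) (hf : f (fun _ => 0) = 1) :
    ∃ g : C(I^ Fin n, ℝ), ∀ x, Circle.exp (g x) = f x := by
  have hu : UniformContinuous f := CompactSpace.uniformContinuous_of_continuous f.continuous
  obtain ⟨δ, hδ, hδ2⟩ := Metric.uniformContinuous_iff.mp hu 2 (by norm_num)
  obtain ⟨N0, hN0⟩ := exists_nat_one_div_lt hδ
  set N := N0 + 1 with hNdef
  have hNpos : 0 < N := N0.succ_pos
  have hNlt : 1 / (N : ℝ) < δ := by exact_mod_cast hN0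
  have hne : ∀ k : ℕ, k < N → ∀ x : I^ Fin n,
      ((f (scale N (k + 1) x) / f (scale N k x) : Circle) : ℂ) ∈ Complex.slitPlane := by
    intro k hk x
    apply mem_slitPlane_of_ne_neg_one (by simp [Circle.norm_coe])
    intro hcon
    have hd : dist (scale N (k + 1) x) (scale N k x) < δ :=
      lt_of_le_of_lt (dist_scale_succ hk x) hNlt
    have h2 := hδ2 hd
    rw [Circle.coe_div, div_eq_iff (Circle.coe_ne_zero _)] at hcon
    have habs : dist (f (scale N (k + 1) x)) (f (scale N k x)) = 2 := by
      change dist (f (scale N (k + 1) x) : ℂ) (f (scale N k x) : ℂ) = 2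
      rw [Complex.dist_eq, hcon]
      have h4 : (-1 : ℂ) * (f (scale N k x) : ℂ) - (f (scale N k x) : ℂ)
          = -(2 * (f (scale N k x) : ℂ)) := by ring
      rw [h4, norm_neg, norm_mul]
      simp [Circle.norm_coe]
    linarith
  refine ⟨⟨fun x => ∑ k ∈ Finset.range N,
      Complex.arg ((f (scale N (k + 1) x) / f (scale N k x) : Circle) : ℂ), ?_⟩, ?_⟩
  · apply continuous_finset_sum
    intro k hk
    rw [Finset.mem_range] at hk
    rw [continuous_iff_continuousAt]
    intro x
    have hc : Continuous fun x : I^ Fin n =>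
        ((f (scale N (k + 1) x) / f (scale N k x) : Circle) : ℂ) :=
      continuous_subtype_val.comp
        ((f.continuous.comp (continuous_scale N (k + 1))).div'
          (f.continuous.comp (continuous_scale N k)))
    have : ContinuousAt (Complex.arg ∘ fun x : I^ Fin n =>
        ((f (scale N (k + 1) x) / f (scale N k x) : Circle) : ℂ)) x :=
      ContinuousAt.comp (Complex.continuousAt_arg (hne k hk x)) hc.continuousAt
    exact this
  · intro x
    simp only [ContinuousMap.coe_mk]
    rw [exp_sum]
    have hterm : ∀ k ∈ Finset.range N,
        Circle.exp (Complex.arg ((f (scale N (k + 1) x) / f (scale N k x) : Circle) : ℂ))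
          = f (scale N (k + 1) x) / f (scale N k x) :=
      fun k _ => Circle.exp_arg _
    rw [Finset.prod_congr rfl hterm, Finset.prod_range_div (fun k => f (scale N k x))]
    rw [scale_zero, hf, scale_self hNpos]
    simp

lemma face_preconnected (i : Fin n) (b : I) :
    IsPreconnected {x : I^ Fin n | x i = b} := by
  haveI : PreconnectedSpace I := Subtype.preconnectedSpace isPreconnected_Icc
  have hc : Continuous (fun x : I^ Fin n => Function.update x i b) := by
    apply continuous_pi
    intro j
    by_cases h : j = i
    · simp only [Function.update_apply, h, if_true]
      exact continuous_const
    · simp only [Function.update_apply, h, if_false]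
      exact continuous_apply j
  have heq : {x : I^ Fin n | x i = b}
      = Set.range (fun x : I^ Fin n => Function.update x i b) := by
    ext y
    constructor
    · intro hy
      exact ⟨y, Function.update_eq_self_iff.mpr (Eq.symm hy)⟩
    · rintro ⟨x, rfl⟩
      exact Function.update_self i b x
  rw [heq]
  exact isPreconnected_range hc

lemma const_on_boundary (hn : 2 ≤ n) (g : C(I^ Fin n, ℝ))
    (h1 : ∀ x ∈ Cube.boundary (Fin n), Circle.exp (g x) = 1)
    {y : I^ Fin n} (hy : y ∈ Cube.boundary (Fin n)) : g y = g (fun _ => 0) := by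
  obtain ⟨i, hb⟩ := hy
  haveI : Nontrivial (Fin n) := Fin.nontrivial_iff_two_le.mpr hn
  obtain ⟨j, hj⟩ := exists_ne i
  set b : I := y i with hbdef
  have hFi : {x : I^ Fin n | x i = b} ⊆ Cube.boundary (Fin n) := by
    intro x hx
    refine ⟨i, ?_⟩
    rw [show x i = y i from hx]
    exact hb
  have hFj : {x : I^ Fin n | x j = 0} ⊆ Cube.boundary (Fin n) := fun x hx => ⟨j, Or.inl hx⟩
  set z := Function.update y j (0 : I) with hzdef
  have hzi : z ∈ {x : I^ Fin n | x i = b} := by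
    show Function.update y j (0 : I) i = b
    rw [Function.update_of_ne (Ne.symm hj)]
  have hzj : z ∈ {x : I^ Fin n | x j = 0} := by
    show Function.update y j (0 : I) j = 0
    rw [Function.update_self]
  have h0j : (fun _ => 0 : I^ Fin n) ∈ {x : I^ Fin n | x j = 0} := rfl
  have e1 : g y = g z :=
    const_on_preconnected g (face_preconnected i b)
      (fun x hx => h1 x (hFi hx)) rfl hzi
  have e2 : g z = g (fun _ => 0) :=
    const_on_preconnected g (face_preconnected j 0)
      (fun x hx => h1 x (hFj hx)) hzj h0j
  rw [e1, e2]

lemma homotopic_const (hn : 2 ≤ n) (f : GenLoop (Fin n) Circle 1) :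
    GenLoop.Homotopic f GenLoop.const := by
  have hn1 : 0 < n := by omega
  have hf0 : f.1 (fun _ => 0) = 1 := f.2 _ (zero_mem_boundary hn1)
  obtain ⟨g, hg⟩ := exists_lift hn1 f.1 hf0
  have h1 : ∀ x ∈ Cube.boundary (Fin n), Circle.exp (g x) = 1 := by
    intro x hx
    rw [hg, f.2 x hx]
  have hgb : ∀ y ∈ Cube.boundary (Fin n), g y = g (fun _ => 0) :=
    fun y hy => const_on_boundary hn g h1 hy
  have hg0 : Circle.exp (g (fun _ => 0)) = 1 := by rw [hg, hf0]
  refine ⟨⟨⟨⟨fun p => Circle.exp ((1 - (p.1 : ℝ)) * g p.2 + (p.1 : ℝ) * g (fun _ => 0)), ?_⟩,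
      ?_, ?_⟩, ?_⟩⟩
  · apply Circle.exp.continuous.comp
    apply Continuous.add
    · exact (continuous_const.sub (continuous_subtype_val.comp continuous_fst)).mul
        (g.continuous.comp continuous_snd)
    · exact (continuous_subtype_val.comp continuous_fst).mul continuous_const
  · intro x
    simp [hg]
  · intro x
    simp only [ContinuousMap.coe_mk]
    have : (1 - ((1 : I) : ℝ)) * g x + ((1 : I) : ℝ) * g (fun _ => 0) = g (fun _ => 0) := by
      norm_num
    rw [this, hg0]
    rfl
  · intro t
    intro x hx
    simp only [ContinuousMap.coe_mk]
    rw [hgb x hx]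
    have : (1 - (t : ℝ)) * g (fun _ => 0) + (t : ℝ) * g (fun _ => 0) = g (fun _ => 0) := by ring
    rw [this, hg0, f.2 x hx]

end HigherPiCircle

theorem higher_homotopy_groups_circle_trivial (n : ℕ) (hn : 2 ≤ n) :
    Subsingleton (HomotopyGroup (Fin n) Circle 1) := by
  refine ⟨fun a b => ?_⟩
  induction a using Quotient.inductionOn with
  | h p =>
  induction b using Quotient.inductionOn with
  | h q =>
  exact Quotient.sound
    ((HigherPiCircle.homotopic_const hn p).trans (HigherPiCircle.homotopic_const hn q).symm)
end
end
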